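/- For each n ∈ ℕ let Xₙ be a path connected metrizable topological space with basepoint xₙ, and let X := ∏_{n∈ℕ} Xₙ with basepoint x := (xₙ)_{n∈ℕ} (so X is path connected and metrizable). Then the strong abelianization ĥ(X, x) is isomorphic as a group to the product ∏_{n∈ℕ} ĥ(Xₙ, xₙ). -/

import Mathlib

open CategoryTheory
open scoped Cardinal

attribute [local instance] Path.Homotopic.setoid

/-- The path-homotopy class of a loop `l` based at `x`, as an element of the
fundamental group `π₁(X, x)`. -/
noncomputable def pathClass {X : Type u} [TopologicalSpace X] {x : X} (l : Path x x) :
    FundamentalGroup X x :=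
  FundamentalGroup.fromPath (⟦l⟧ : Path.Homotopic.Quotient x x)

/-- The loop set of a subgroup `G` of `π₁(Y, y)`: the set of loops at `y` (elements of the
loop space `Path y y`, carrying the compact-open/uniform convergence topology) whose
path-homotopy class lies in `G`. -/
def loopSet {Y : Type u} [TopologicalSpace Y] {y : Y} (G : Subgroup (FundamentalGroup Y y)) :
    Set (Path y y) :=
  {l | pathClass l ∈ G}

/-- The smallest closed subgroup of `π₁(Y, y)` containing the commutator subgroup,
namely the intersection of all subgroups that contain the commutator subgroup and
whose loop set is closed in the loop space. -/
noncomputable def strongCommutator (Y : Type u) [TopologicalSpace Y] (y : Y) :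
    Subgroup (FundamentalGroup Y y) :=
  ⨅ (H : Subgroup (FundamentalGroup Y y))
    (_ : commutator (FundamentalGroup Y y) ≤ H ∧ IsClosed (loopSet H)), H

theorem commutator_le_strongCommutator (Y : Type u) [TopologicalSpace Y] (y : Y) :
    commutator (FundamentalGroup Y y) ≤ strongCommutator Y y :=
  le_iInf fun _ => le_iInf fun h => h.1

open scoped commutatorElement in
instance strongCommutator_normal (Y : Type u) [TopologicalSpace Y] (y : Y) :
    (strongCommutator Y y).Normal := by
  constructor
  intro g hg a
  have h1 : ⁅a, g⁆ ∈ strongCommutator Y y := by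
    apply commutator_le_strongCommutator Y y
    rw [commutator_def]
    exact Subgroup.commutator_mem_commutator (Subgroup.mem_top a) (Subgroup.mem_top g)
  have h2 : a * g * a⁻¹ = ⁅a, g⁆ * g := by group
  rw [h2]; exact Subgroup.mul_mem _ h1 hg

/-- The strong abelianization `ĥ(Y, y)`: the quotient of `π₁(Y, y)` by the smallest
closed subgroup containing the commutator subgroup. -/
noncomputable abbrev StrongAb (Y : Type u) [TopologicalSpace Y] (y : Y) : Type u :=
  FundamentalGroup Y y ⧸ strongCommutator Y y

namespace Stmt7Aux

variable {Y : Type v} {Z : Type w} [TopologicalSpace Y] [TopologicalSpace Z] {y : Y} {z : Z}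

/-- The loop classes at `y`, as the type of endomorphisms in the fundamental groupoid. -/
abbrev LC (y : Y) : Type v := @Quiver.Hom (FundamentalGroupoid Y) _ ⟨y⟩ ⟨y⟩

/-- Build an element of the fundamental group from a loop class. -/
noncomputable def fromQ (q : LC y) : FundamentalGroup Y y := q

lemma hom_injective {g h : FundamentalGroup Y y} (e : g.toPath = h.toPath) : g = h := e

lemma fromQ_hom (q : LC y) : (fromQ q).toArrow = q := rfl

lemma pathClass_eq (l : Path y y) : pathClass l = fromQ ⟦l⟧ := by
  apply hom_injective; rfl

lemma mul_hom (g h : FundamentalGroup Y y) :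
    (g * h).toPath = h.toArrow ≫ g.toArrow := rfl

lemma pathClass_congr' {p q : Path y y}
    (h : (⟦p⟧ : Path.Homotopic.Quotient y y) = ⟦q⟧) : pathClass p = pathClass q := by
  apply hom_injective
  exact h

lemma pathClass_congr {p q : Path y y} (h : ∀ t, p t = q t) : pathClass p = pathClass q :=
  pathClass_congr' (eq_of_heq (Path.Homotopic.hpath_hext h))

lemma pathClass_trans (p q : Path y y) :
    pathClass (p.trans q) = pathClass q * pathClass p := by
  apply hom_injective
  rw [mul_hom]
  show (⟦p.trans q⟧ : Path.Homotopic.Quotient y y) = Path.Homotopic.Quotient.trans ⟦p⟧ ⟦q⟧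
  exact Path.Homotopic.Quotient.mk_trans p q

lemma exists_pathClass_eq (g : FundamentalGroup Y y) : ∃ p : Path y y, pathClass p = g := by
  obtain ⟨p, hp⟩ := Quotient.exists_rep g.toPath
  exact ⟨p, hom_injective hp⟩

/-- Build a group hom on fundamental groups from a loop-level map. -/
noncomputable def loopHom (F : Path y y → Path z z)
    (hF : ∀ p q : Path y y, p.Homotopic q → (F p).Homotopic (F q))
    (hFt : ∀ p q : Path y y, (F (p.trans q)).Homotopic ((F p).trans (F q))) :
    FundamentalGroup Y y →* FundamentalGroup Z z := by
  refine MonoidHom.mk' (fun g => fromQ (Quotient.map F hF g.toPath)) ?_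
  have key : ∀ l : Path y y,
      fromQ (Quotient.map F hF (pathClass l).toPath)
        = pathClass (F l) := fun l => hom_injective rfl
  intro g h
  obtain ⟨p, rfl⟩ := exists_pathClass_eq g
  obtain ⟨q, rfl⟩ := exists_pathClass_eq h
  rw [← pathClass_trans q p]
  dsimp only
  rw [key, key, key, ← pathClass_trans (F q) (F p)]
  exact pathClass_congr' (Quotient.sound (hFt q p))

lemma loopHom_pathClass (F : Path y y → Path z z) (hF) (hFt) (l : Path y y) :
    loopHom F hF hFt (pathClass l) = pathClass (F l) := by
  apply hom_injective; rfl

end Stmt7Aux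

namespace Stmt7Aux

open Filter Topology

section Spaces

variable {X : ℕ → Type} [∀ n, TopologicalSpace (X n)] (x : ∀ n, X n)

/-- The loop in the product space supported in the `n`-th coordinate. -/
def embLoop (n : ℕ) (p : Path (x n) (x n)) : Path x x where
  toFun t := Function.update x n (p t)
  continuous_toFun := continuous_const.update n p.continuous
  source' := by simp
  target' := by simp

@[simp] lemma embLoop_apply (n : ℕ) (p : Path (x n) (x n)) (t : unitInterval) :
    embLoop x n p t = Function.update x n (p t) := rfl

/-- Homotopies are preserved by `embLoop`. -/
def embLoopHomotopy (n : ℕ) {p q : Path (x n) (x n)} (F : Path.Homotopy p q) :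
    Path.Homotopy (embLoop x n p) (embLoop x n q) where
  toFun st := Function.update x n (F st)
  continuous_toFun := continuous_const.update n F.continuous
  map_zero_left t := by simp [F.apply_zero]
  map_one_left t := by simp [F.apply_one]
  prop' t s hs := congrArg (Function.update x n) (F.prop' t s hs)

lemma embLoop_homotopic (n : ℕ) (p q : Path (x n) (x n)) (h : p.Homotopic q) :
    (embLoop x n p).Homotopic (embLoop x n q) :=
  Nonempty.map (embLoopHomotopy x n) h

lemma embLoop_trans (n : ℕ) (p q : Path (x n) (x n)) (t : unitInterval) :
    embLoop x n (p.trans q) t = ((embLoop x n p).trans (embLoop x n q)) t := by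
  simp only [embLoop_apply, Path.trans_apply]
  split_ifs <;> rfl

/-- The group homomorphism `π₁(Xₙ) →* π₁(∏ X)` induced by the basepoint inclusion. -/
noncomputable def embHom (n : ℕ) : FundamentalGroup (X n) (x n) →* FundamentalGroup (∀ m, X m) x :=
  loopHom (embLoop x n) (embLoop_homotopic x n)
    (fun p q => Quotient.exact (eq_of_heq (Path.Homotopic.hpath_hext (embLoop_trans x n p q))))

/-- The group homomorphism `π₁(∏ X) →* π₁(Xₙ)` induced by the projection. -/
noncomputable def projHom (n : ℕ) : FundamentalGroup (∀ m, X m) x →* FundamentalGroup (X n) (x n) :=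
  loopHom (fun l => l.map (continuous_apply n))
    (fun p q h => Path.Homotopic.map h ⟨fun g => g n, continuous_apply n⟩)
    (fun p q => by rw [Path.map_trans])

lemma continuous_embLoop (n : ℕ) : Continuous (embLoop x n) := by
  apply continuous_induced_rng.2
  have h1 : Continuous fun p : Path (x n) (x n) => (p : C(unitInterval, X n)) :=
    continuous_induced_dom
  have h2 := ContinuousMap.continuous_postcomp
    (⟨fun ξ => Function.update x n ξ, continuous_const.update n continuous_id⟩ :
      C(X n, ∀ m, X m)) (X := unitInterval)
  exact h2.comp h1

lemma continuous_projLoop (n : ℕ) :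
    Continuous (fun l : Path x x => l.map (continuous_apply n) : Path x x → Path (x n) (x n)) := by
  apply continuous_induced_rng.2
  have h1 : Continuous fun p : Path x x => (p : C(unitInterval, ∀ m, X m)) :=
    continuous_induced_dom
  have h2 := ContinuousMap.continuous_postcomp
    (⟨fun g => g n, continuous_apply n⟩ : C(∀ m, X m, X n)) (X := unitInterval)
  exact h2.comp h1

lemma trans_pointwise {Y : Type*} [TopologicalSpace Y] {u v w : Y} {a a' : Path u v}
    {b b' : Path v w} (ha : ∀ t, a t = a' t) (hb : ∀ t, b t = b' t) (t : unitInterval) :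
    (a.trans b) t = (a'.trans b') t := by
  rw [Path.trans_apply, Path.trans_apply]
  split_ifs
  · exact ha _
  · exact hb _

lemma class_congr {Y : Type*} [TopologicalSpace Y] {u v : Y} {p q : Path u v}
    (h : ∀ t, p t = q t) : (⟦p⟧ : Path.Homotopic.Quotient u v) = ⟦q⟧ :=
  eq_of_heq (Path.Homotopic.hpath_hext h)

lemma class_trans_refl {Y : Type*} [TopologicalSpace Y] {u v : Y} (p : Path u v) :
    (⟦p.trans (Path.refl v)⟧ : Path.Homotopic.Quotient u v) = ⟦p⟧ :=
  Quotient.sound ⟨Path.Homotopy.transRefl p⟩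

lemma class_refl_trans {Y : Type*} [TopologicalSpace Y] {u v : Y} (p : Path u v) :
    (⟦(Path.refl u).trans p⟧ : Path.Homotopic.Quotient u v) = ⟦p⟧ :=
  Quotient.sound ⟨Path.Homotopy.reflTrans p⟩

/-- The truncation of a loop in the product space: coordinates `≤ k` move along `α`,
the others stay at the basepoint. -/
def segLoop (k : ℕ) (α : Path x x) : Path x x where
  toFun t m := if m ≤ k then α t m else x m
  continuous_toFun := continuous_pi fun m => by
    by_cases h : m ≤ k
    · simp only [if_pos h]; exact (continuous_apply m).comp α.continuous
    · simpa only [if_neg h] using continuous_const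
  source' := by funext m; by_cases h : m ≤ k <;> simp [h]
  target' := by funext m; by_cases h : m ≤ k <;> simp [h]

@[simp] lemma segLoop_apply (k : ℕ) (α : Path x x) (t : unitInterval) (m : ℕ) :
    segLoop x k α t m = if m ≤ k then α t m else x m := rfl

lemma segLoop_zero (α : Path x x) (t : unitInterval) :
    segLoop x 0 α t = embLoop x 0 (α.map (continuous_apply 0)) t := by
  funext m
  rcases Nat.eq_zero_or_pos m with rfl | hm
  · simp
  · have h0 : m ≠ 0 := hm.ne'
    simp [h0, Function.update_of_ne h0]

lemma segLoop_succ_class (k : ℕ) (α : Path x x) :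
    (⟦segLoop x (k + 1) α⟧ : Path.Homotopic.Quotient x x)
      = ⟦(segLoop x k α).trans (embLoop x (k + 1) (α.map (continuous_apply (k + 1))))⟧ := by
  have key : ∀ m : ℕ, Path.Homotopic.proj m (⟦segLoop x (k + 1) α⟧ : Path.Homotopic.Quotient x x)
      = Path.Homotopic.proj m
        (⟦(segLoop x k α).trans (embLoop x (k + 1) (α.map (continuous_apply (k + 1))))⟧ :
          Path.Homotopic.Quotient x x) := by
    intro m
    have hLm : Path.Homotopic.proj m
          (⟦segLoop x (k + 1) α⟧ : Path.Homotopic.Quotient x x)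
        = ⟦(segLoop x (k + 1) α).map (continuous_apply m)⟧ :=
      (Path.Homotopic.Quotient.mk_map _ _).symm
    have hRm : Path.Homotopic.proj m
          (⟦(segLoop x k α).trans (embLoop x (k + 1) (α.map (continuous_apply (k + 1))))⟧ :
            Path.Homotopic.Quotient x x)
        = ⟦((segLoop x k α).map (continuous_apply m)).trans
            ((embLoop x (k + 1) (α.map (continuous_apply (k + 1)))).map (continuous_apply m))⟧ := by
      rw [← Path.map_trans]
      exact (Path.Homotopic.Quotient.mk_map _ _).symm
    rw [hLm, hRm]
    by_cases hm1 : m ≤ k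
    · have hm2 : m ≤ k + 1 := hm1.trans (Nat.le_succ k)
      rw [class_congr (q := α.map (continuous_apply m)) (fun t => by simp [hm2]),
        class_congr (q := (α.map (continuous_apply m)).trans (Path.refl (x m)))
          (trans_pointwise (fun t => by simp [hm1])
            (fun t => by simp [Function.update_of_ne (Nat.ne_of_lt (Nat.lt_succ_of_le hm1))])),
        class_trans_refl]
    · by_cases hm2 : m ≤ k + 1
      · have hmeq : m = k + 1 := Nat.le_antisymm hm2 (Nat.succ_le_of_lt (Nat.lt_of_not_le hm1))
        rw [class_congr (q := α.map (continuous_apply m)) (fun t => by simp [hm2]),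
          class_congr (q := (Path.refl (x m)).trans (α.map (continuous_apply m)))
            (trans_pointwise (fun t => by simp [hm1])
              (fun t => by subst hmeq; simp)),
          class_refl_trans]
      · have hne : m ≠ k + 1 := fun h => hm2 (le_of_eq h)
        rw [class_congr (q := Path.refl (x m)) (fun t => by simp [hm1, hm2]),
          class_congr (q := (Path.refl (x m)).trans (Path.refl (x m)))
            (trans_pointwise (fun t => by simp [hm1])
              (fun t => by simp [Function.update_of_ne hne])),
          class_refl_trans]
  exact (Path.Homotopic.pi_proj _).symm.trans
    ((congrArg Path.Homotopic.pi (funext key)).trans (Path.Homotopic.pi_proj _))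

lemma tendsto_segLoop [∀ n, TopologicalSpace.MetrizableSpace (X n)] (α : Path x x) :
    Filter.Tendsto (fun k => segLoop x k α) Filter.atTop (nhds α) := by
  letI : ∀ n, MetricSpace (X n) := fun n => TopologicalSpace.metrizableSpaceMetric (X n)
  rw [nhds_induced ((↑) : Path x x → C(unitInterval, ∀ n, X n)), Filter.tendsto_comap_iff]
  apply ContinuousMap.tendsto_iff_tendstoUniformly.2
  intro u hu
  rw [Pi.uniformity] at hu
  obtain ⟨I, hIfin, V, hV, rfl⟩ := Filter.mem_iInf.mp hu
  obtain ⟨K, hK⟩ := hIfin.bddAbove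
  refine Filter.eventually_atTop.2 ⟨K, fun k hk t => ?_⟩
  rw [Set.mem_iInter]
  intro n
  obtain ⟨W, hW, hWsub⟩ := Filter.mem_comap.mp (hV n)
  apply hWsub
  have hn : (n : ℕ) ≤ k := le_trans (hK n.2) hk
  show ((α : C(unitInterval, ∀ m, X m)) t (n : ℕ), segLoop x k α t (n : ℕ)) ∈ W
  have : segLoop x k α t (n : ℕ) = α t (n : ℕ) := by simp [hn]
  rw [this]
  exact refl_mem_uniformity hW

end Spaces

end Stmt7Aux


namespace Stmt7Aux

section Main

lemma commutator_le_comap {G G' : Type*} [Group G] [Group G'] (f : G →* G') :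
    commutator G ≤ (commutator G').comap f := by
  rw [← Subgroup.map_le_iff_le_comap, commutator_def, Subgroup.map_commutator]
  exact le_trans (Subgroup.commutator_mono le_top le_top) (le_of_eq (commutator_def G').symm)

lemma loopSet_strongCommutator_closed (Y : Type u) [TopologicalSpace Y] (y : Y) :
    IsClosed (loopSet (strongCommutator Y y)) := by
  have h : loopSet (strongCommutator Y y)
      = ⋂ (H : Subgroup (FundamentalGroup Y y))
          (_ : commutator (FundamentalGroup Y y) ≤ H ∧ IsClosed (loopSet H)), loopSet H := by
    ext l
    simp [loopSet, strongCommutator, Subgroup.mem_iInf]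
  rw [h]
  exact isClosed_iInter fun H => isClosed_iInter fun hc => hc.2

variable {X : ℕ → Type} [∀ n, TopologicalSpace (X n)] (x : ∀ n, X n)

lemma embHom_pathClass (n : ℕ) (p : Path (x n) (x n)) :
    embHom x n (pathClass p) = pathClass (embLoop x n p) :=
  loopHom_pathClass _ _ _ _

lemma projHom_pathClass (n : ℕ) (l : Path x x) :
    projHom x n (pathClass l) = pathClass (l.map (continuous_apply n)) :=
  loopHom_pathClass _ _ _ _

/-- Step A: elements of the strong commutator of a factor, embedded into the product,
lie in every closed subgroup `H` containing the commutator subgroup. -/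
lemma embHom_mem (n : ℕ) (H : Subgroup (FundamentalGroup (∀ m, X m) x))
    (hcomm : commutator (FundamentalGroup (∀ m, X m) x) ≤ H) (hcl : IsClosed (loopSet H))
    {c : FundamentalGroup (X n) (x n)} (hc : c ∈ strongCommutator (X n) (x n)) :
    embHom x n c ∈ H := by
  have hle : strongCommutator (X n) (x n) ≤ H.comap (embHom x n) := by
    refine iInf_le_of_le (H.comap (embHom x n)) (iInf_le_of_le ⟨?_, ?_⟩ le_rfl)
    · exact le_trans (commutator_le_comap (embHom x n)) (Subgroup.comap_mono hcomm)
    · have h : loopSet (H.comap (embHom x n)) = embLoop x n ⁻¹' loopSet H := by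
        ext p
        simp only [loopSet, Set.mem_setOf_eq, Subgroup.mem_comap, Set.mem_preimage,
          embHom_pathClass]
      rw [h]
      exact hcl.preimage (continuous_embLoop x n)
  exact Subgroup.mem_comap.mp (hle hc)

/-- The canonical homomorphism `π₁(∏ X) →* ∏ₙ ĥ(Xₙ, xₙ)`. -/
noncomputable def psi : FundamentalGroup (∀ n, X n) x →* ∀ n, StrongAb (X n) (x n) :=
  Pi.monoidHom fun n => (QuotientGroup.mk' (strongCommutator (X n) (x n))).comp (projHom x n)

lemma psi_surjective : Function.Surjective (psi x) := by
  intro c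
  have h1 : ∀ n, ∃ g : FundamentalGroup (X n) (x n),
      QuotientGroup.mk' (strongCommutator (X n) (x n)) g = c n :=
    fun n => QuotientGroup.mk'_surjective _ (c n)
  choose g hg using h1
  choose p hp using fun n => exists_pathClass_eq (g n)
  refine ⟨fromQ (Path.Homotopic.pi fun n => (⟦p n⟧ : Path.Homotopic.Quotient (x n) (x n))), ?_⟩
  funext n
  show (QuotientGroup.mk' (strongCommutator (X n) (x n)))
    (projHom x n (fromQ (Path.Homotopic.pi fun m => ⟦p m⟧))) = c n
  have hproj : projHom x n (fromQ (Path.Homotopic.pi fun m =>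
      (⟦p m⟧ : Path.Homotopic.Quotient (x m) (x m)))) = pathClass (p n) :=
    hom_injective (Path.Homotopic.proj_pi n _)
  rw [hproj, hp, hg]

lemma mem_psi_ker_iff (g : FundamentalGroup (∀ n, X n) x) :
    g ∈ (psi x).ker ↔ ∀ n, projHom x n g ∈ strongCommutator (X n) (x n) := by
  rw [MonoidHom.mem_ker]
  constructor
  · intro h n
    have := congrFun h n
    exact (QuotientGroup.eq_one_iff (projHom x n g)).1 this
  · intro h
    funext n
    exact (QuotientGroup.eq_one_iff (projHom x n g)).2 (h n)

/-- The key identification: the strong commutator of the product is the kernel of `psi`. -/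
lemma strongCommutator_eq_ker [∀ n, TopologicalSpace.MetrizableSpace (X n)] :
    strongCommutator (∀ n, X n) x = (psi x).ker := by
  apply le_antisymm
  · -- the kernel contains the commutator subgroup and has closed loop set
    refine iInf_le_of_le (psi x).ker (iInf_le_of_le ⟨?_, ?_⟩ le_rfl)
    · intro g hg
      rw [mem_psi_ker_iff]
      intro n
      exact commutator_le_strongCommutator (X n) (x n) (commutator_le_comap (projHom x n) hg)
    · have h : loopSet ((psi x).ker)
          = ⋂ n, (fun l : Path x x => l.map (continuous_apply n)) ⁻¹'
              loopSet (strongCommutator (X n) (x n)) := by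
        ext l
        simp only [loopSet, Set.mem_setOf_eq, mem_psi_ker_iff, Set.mem_iInter,
          Set.mem_preimage, projHom_pathClass]
      rw [h]
      exact isClosed_iInter fun n =>
        (loopSet_strongCommutator_closed (X n) (x n)).preimage (continuous_projLoop x n)
  · intro g hg
    have hSn := (mem_psi_ker_iff x g).1 hg
    refine Subgroup.mem_iInf.2 fun H => Subgroup.mem_iInf.2 fun hH => ?_
    obtain ⟨α, hα⟩ := exists_pathClass_eq g
    have hSn' : ∀ n, pathClass (α.map (continuous_apply n))
        ∈ strongCommutator (X n) (x n) := by
      intro n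
      rw [← projHom_pathClass, hα]
      exact hSn n
    have hseg : ∀ k, pathClass (segLoop x k α) ∈ H := by
      intro k
      induction k with
      | zero =>
        have h0 := embHom_mem x 0 H hH.1 hH.2 (hSn' 0)
        rw [embHom_pathClass] at h0
        rw [pathClass_congr (segLoop_zero x α)]
        exact h0
      | succ k ih =>
        have h2 := embHom_mem x (k + 1) H hH.1 hH.2 (hSn' (k + 1))
        rw [embHom_pathClass] at h2
        have heq : pathClass (segLoop x (k + 1) α)
            = pathClass (embLoop x (k + 1) (α.map (continuous_apply (k + 1))))
              * pathClass (segLoop x k α) := by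
          rw [← pathClass_trans]
          exact pathClass_congr' (segLoop_succ_class x k α)
        rw [heq]
        exact H.mul_mem h2 ih
    have hmem : α ∈ loopSet H :=
      hH.2.mem_of_tendsto (tendsto_segLoop x α) (Filter.Eventually.of_forall hseg)
    rw [← hα]
    exact hmem

end Main

end Stmt7Aux

/-- If `(Xₙ, xₙ)` are path connected metrizable pointed spaces, then the
strong abelianization of the product `∏ₙ Xₙ` at `(xₙ)ₙ` is isomorphic to the product of
the strong abelianizations `∏ₙ ĥ(Xₙ, xₙ)`. -/
theorem stmt7 (X : ℕ → Type) [∀ n, TopologicalSpace (X n)]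
    [∀ n, TopologicalSpace.MetrizableSpace (X n)] [∀ n, PathConnectedSpace (X n)]
    (x : ∀ n, X n) :
    Nonempty (StrongAb (∀ n, X n) x ≃* ∀ n, StrongAb (X n) (x n)) := by
  classical
  exact ⟨(QuotientGroup.quotientMulEquivOfEq (Stmt7Aux.strongCommutator_eq_ker x)).trans
    (QuotientGroup.quotientKerEquivOfSurjective (Stmt7Aux.psi x) (Stmt7Aux.psi_surjective x))⟩
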